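/- Let k ≥ 2 be an integer and a ∈ ℂ. If the function f(z) = z + a·z^k belongs to the parabolic starlike class S_p, then f ∈ Ω. -/

import Mathlib

open Complex Metric

/-- The open unit disc in `ℂ`. -/
def unitDisc : Set ℂ := Metric.ball 0 1

/-- `f ∈ 𝒜ₙ`: `f` is analytic on the unit disc with power series
`f(z) = z + ∑_{k=n+1}^∞ a_k z^k`. -/
def MemA (n : ℕ) (f : ℂ → ℂ) : Prop :=
  DifferentiableOn ℂ f unitDisc ∧
    ∃ a : ℕ → ℂ, ∀ z ∈ unitDisc, f z = z + ∑' k : ℕ, a k * z ^ (n + 1 + k)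

/-- `f ∈ Ωₙ`: `f ∈ 𝒜ₙ` and `|z f'(z) - f(z)| < 1/2` on the unit disc. -/
def MemOmega (n : ℕ) (f : ℂ → ℂ) : Prop :=
  MemA n f ∧ ∀ z ∈ unitDisc, ‖z * deriv f z - f z‖ < 1 / 2

lemma deriv_f_aux (a : ℂ) (n : ℕ) (z : ℂ) :
    deriv (fun w => w + a * w ^ (n+2)) z = 1 + a * ((n+2) * z^(n+1)) := by
  have h := (hasDerivAt_id z).add (((hasDerivAt_pow (n+2) z)).const_mul a)
  simpa using (show HasDerivAt (fun w => w + a * w ^ (n+2)) _ z from h).deriv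

lemma root_aux (a : ℂ) (ha : a ≠ 0) (n : ℕ) (s : ℝ) (hs0 : 0 < s) (hs : s < ‖a‖) :
    ∃ z : ℂ, z ∈ unitDisc ∧ z ≠ 0 ∧ a * z ^ (n+1) = -(s:ℂ) := by
  obtain ⟨z, hz⟩ := IsAlgClosed.exists_pow_nat_eq (-(s:ℂ)/a) (Nat.succ_pos n)
  have hz0 : z ≠ 0 := by
    intro h
    rw [h] at hz
    simp only [zero_pow (Nat.succ_ne_zero n)] at hz
    have : (s:ℂ) = 0 := by field_simp at hz; simpa using hz
    exact hs0.ne' (by exact_mod_cast this)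
  have hnorm : ‖z‖ ^ (n+1) = s / ‖a‖ := by
    rw [← norm_pow, hz]
    rw [norm_div, norm_neg, Complex.norm_real]
    rw [Real.norm_of_nonneg hs0.le]
  have hlt : ‖z‖ < 1 := by
    by_contra h
    push_neg at h
    have h1 : (1:ℝ) ≤ ‖z‖ ^ (n+1) := one_le_pow₀ h
    rw [hnorm] at h1
    have ha0 : (0:ℝ) < ‖a‖ := norm_pos_iff.mpr ha
    rw [le_div_iff₀ ha0] at h1
    linarith
  refine ⟨z, by simpa [unitDisc] using hlt, hz0, ?_⟩
  rw [hz]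
  field_simp

theorem stmt_10 (k : ℕ) (hk : 2 ≤ k) (a : ℂ)
    (hSp : ∀ z ∈ unitDisc, z ≠ 0 →
      (z + a * z ^ k ≠ 0 ∧
        (z * deriv (fun w => w + a * w ^ k) z / (z + a * z ^ k)).re >
          ‖z * deriv (fun w => w + a * w ^ k) z / (z + a * z ^ k) - 1‖)) :
    MemOmega 1 (fun z => z + a * z ^ k) := by
  obtain ⟨n, rfl⟩ : ∃ n, k = n + 2 := ⟨k - 2, by omega⟩
  constructor
  · constructor
    · exact (differentiable_id.add ((differentiable_pow _).const_mul a)).differentiableOn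
    · refine ⟨fun j => if j = n then a else 0, fun z _ => ?_⟩
      have ht : ∑' j : ℕ, (if j = n then a else 0) * z ^ (1 + 1 + j) = a * z ^ (n+2) := by
        rw [tsum_eq_single n (by intro b hb; simp [hb]), if_pos rfl]
        ring
      rw [ht]
  · intro z hz
    have hzlt : ‖z‖ < 1 := by simpa [unitDisc] using hz
    rw [deriv_f_aux]
    have hexpr : z * (1 + a * ((n+2) * z^(n+1))) - (z + a * z ^ (n+2))
        = ((n:ℂ)+1) * a * z^(n+2) := by push_cast; ring
    rw [hexpr]
    by_cases ha : a = 0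
    · simp [ha]
    · -- key step: for any 0 < s < ‖a‖, s ≠ 1, and if s < 1 then (2n+3)s < 1
      have hQ : ∀ s : ℝ, 0 < s → s < ‖a‖ → s ≠ 1 ∧ (s < 1 → (2*(n:ℝ)+3)*s < 1) := by
        intro s hs0 hs
        obtain ⟨w, hwD, hw0, hws⟩ := root_aux a ha n s hs0 hs
        obtain ⟨hf0, hre⟩ := hSp w hwD hw0
        have hfw : w + a * w ^ (n+2) = w * (1 - (s:ℂ)) := by
          have h1 : a * w ^ (n+2) = (a * w ^ (n+1)) * w := by ring
          rw [h1, hws]; ring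
        constructor
        · intro h1
          apply hf0
          rw [hfw, h1]
          simp
        · intro hs1
          have hderiv : w * deriv (fun x => x + a * x ^ (n+2)) w
              = w * (1 - ((n:ℂ)+2) * s) := by
            rw [deriv_f_aux]
            have h1 : a * (((n:ℂ)+2) * w^(n+1)) = ((n:ℂ)+2) * (a * w^(n+1)) := by ring
            push_cast
            rw [h1, hws]
            ring
          have h1s : (1:ℂ) - (s:ℝ) ≠ 0 := by
            intro h
            have h2 : ((s:ℝ):ℂ) = 1 := by linear_combination -h
            exact hs1.ne (by exact_mod_cast h2)
          set x : ℝ := (1 - ((n:ℝ)+2)*s)/(1-s) with hx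
          have hq : w * deriv (fun x => x + a * x ^ (n+2)) w / (w + a * w ^ (n+2))
              = ((x:ℝ):ℂ) := by
            rw [hderiv, hfw, hx]
            push_cast
            rw [mul_div_mul_left _ _ hw0]
          rw [hq] at hre
          have hre2 : |x - 1| < x := by
            simpa [Complex.ofReal_re, ← Complex.ofReal_one, ← Complex.ofReal_sub,
              Complex.norm_real] using hre
          have habs : 1 - x ≤ |x - 1| := by
            rw [abs_sub_comm]; exact le_abs_self _
          have hxhalf : 1/2 < x := by linarith
          have hden : (0:ℝ) < 1 - s := by linarith
          rw [hx, lt_div_iff₀ hden] at hxhalf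
          linarith
      have ha1 : ‖a‖ ≤ 1 := by
        by_contra h
        push_neg at h
        exact (hQ 1 one_pos h).1 rfl
      have hd : (0:ℝ) < 2*(n:ℝ)+3 := by positivity
      have hB : (2*(n:ℝ)+3) * ‖a‖ ≤ 1 := by
        by_contra h
        push_neg at h
        have h1 : 1/(2*(n:ℝ)+3) < ‖a‖ := (div_lt_iff₀ hd).mpr (by linarith)
        set s : ℝ := (1/(2*(n:ℝ)+3) + ‖a‖)/2 with hsdef
        have hs0 : 0 < s := by positivity
        have hsa : s < ‖a‖ := by rw [hsdef]; linarith
        have hs1 : s < 1 := lt_of_lt_of_le hsa ha1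
        have h2 := (hQ s hs0 hsa).2 hs1
        have h3 : 1/(2*(n:ℝ)+3) < s := by rw [hsdef]; linarith
        rw [div_lt_iff₀ hd] at h3
        nlinarith
      rw [norm_mul, norm_mul, norm_pow]
      have hn1 : ‖((n:ℂ)+1)‖ = (n:ℝ)+1 := by
        rw [show ((n:ℂ)+1) = ((n+1:ℕ):ℂ) by push_cast; ring, Complex.norm_natCast]
        push_cast; ring
      rw [hn1]
      have hzp : ‖z‖^(n+2) ≤ 1 := pow_le_one₀ (norm_nonneg z) hzlt.le
      have hzpn : (0:ℝ) ≤ ‖z‖^(n+2) := pow_nonneg (norm_nonneg z) _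
      have han : (0:ℝ) ≤ ‖a‖ := norm_nonneg a
      have han' : (0:ℝ) < ‖a‖ := norm_pos_iff.mpr ha
      have h4 : ((n:ℝ)+1)*‖a‖*‖z‖^(n+2) ≤ ((n:ℝ)+1)*‖a‖*1 :=
        mul_le_mul_of_nonneg_left hzp (by positivity)
      nlinarith [h4, hB, han']
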